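/- Let p : ℝ² → ℝ (or ℝ^d → ℝ) be a C² Morse function whose gradient is L-Lipschitz, on a compact domain. Let λ be a split level with critical point y₀ on {p = λ} (so ∇p(y₀) = 0 and ∇²p(y₀) is non-degenerate), and let C₁, C₂ be two connected components of {p > λ} that merge at λ near y₀. Then there exist constants c_S > 0 and δ_S > 0 such that for all δ ∈ (0, δ_S], dist(C₁ ∩ {p ≥ λ + δ}, C₂ ∩ {p ≥ λ + δ}) ≥ c_S √δ. -/

import Mathlib

open Metric Set

theorem stmt13 (d : ℕ) (p : EuclideanSpace ℝ (Fin d) → ℝ)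
    (hp : ContDiff ℝ 2 p)
    (L : ℝ) (hL : 0 < L) (hgrad : LipschitzWith (Real.toNNReal L) (fun x => gradient p x))
    (K : Set (EuclideanSpace ℝ (Fin d))) (hK : IsCompact K)
    (l : ℝ) (hsub : {x | l < p x} ⊆ K)
    -- Morse: every critical point has non-degenerate Hessian
    (hmorse : ∀ x, gradient p x = 0 →
      Function.Injective (fderiv ℝ (fun y => gradient p y) x))
    (y₀ : EuclideanSpace ℝ (Fin d)) (hy₀ : p y₀ = l) (hcrit : gradient p y₀ = 0)
    (C₁ C₂ : Set (EuclideanSpace ℝ (Fin d)))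
    (hC₁ : ∃ x ∈ {x | l < p x}, C₁ = connectedComponentIn {x | l < p x} x)
    (hC₂ : ∃ x ∈ {x | l < p x}, C₂ = connectedComponentIn {x | l < p x} x)
    (hne : C₁ ≠ C₂)
    -- C₁ and C₂ merge at level l near y₀
    (hmerge : y₀ ∈ closure C₁ ∩ closure C₂) :
    ∃ cS > 0, ∃ δS > 0, ∀ δ ∈ Set.Ioc (0 : ℝ) δS,
      ∀ a ∈ C₁ ∩ {x | l + δ ≤ p x}, ∀ b ∈ C₂ ∩ {x | l + δ ≤ p x},
        cS * Real.sqrt δ ≤ dist a b := by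
  have hsL : 0 < Real.sqrt L := Real.sqrt_pos.mpr hL
  refine ⟨2 / Real.sqrt L, by positivity, 1, one_pos, ?_⟩
  rintro δ ⟨hδ0, -⟩ a ⟨haC, haL⟩ b ⟨hbC, hbL⟩
  simp only [Set.mem_setOf_eq] at haL hbL
  have hdiff : Differentiable ℝ p := hp.differentiable (by norm_num)
  -- fderiv is L-Lipschitz
  have hfd : ∀ x y : EuclideanSpace ℝ (Fin d),
      ‖fderiv ℝ p x - fderiv ℝ p y‖ ≤ L * ‖x - y‖ := by
    intro x y
    have h1 : ∀ w : EuclideanSpace ℝ (Fin d),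
        fderiv ℝ p w = (InnerProductSpace.toDual ℝ _) (gradient p w) := by
      intro w; simp [gradient]
    rw [h1 x, h1 y, ← map_sub, (InnerProductSpace.toDual ℝ _).norm_map]
    have h2 := hgrad.dist_le_mul x y
    rw [dist_eq_norm, dist_eq_norm] at h2
    calc ‖gradient p x - gradient p y‖ ≤ (Real.toNNReal L : ℝ) * ‖x - y‖ := h2
      _ = L * ‖x - y‖ := by rw [Real.coe_toNNReal L hL.le]
  -- there is a point on the segment with p z ≤ l
  obtain ⟨z, hzseg, hzl⟩ : ∃ z ∈ segment ℝ a b, p z ≤ l := by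
    by_contra h
    push_neg at h
    have hsub' : segment ℝ a b ⊆ {x | l < p x} := fun z hz => h z hz
    have hpre : IsPreconnected (segment ℝ a b) := (convex_segment a b).isPreconnected
    have hmem := hpre.subset_connectedComponentIn (left_mem_segment ℝ a b) hsub'
    have hb : b ∈ connectedComponentIn {x | l < p x} a := hmem (right_mem_segment ℝ a b)
    obtain ⟨x₁, hx₁, rfl⟩ := hC₁
    obtain ⟨x₂, hx₂, rfl⟩ := hC₂
    have e1 : connectedComponentIn {x | l < p x} x₁ = connectedComponentIn {x | l < p x} a :=
      connectedComponentIn_eq haC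
    have e2 : connectedComponentIn {x | l < p x} x₂ = connectedComponentIn {x | l < p x} b :=
      connectedComponentIn_eq hbC
    have e3 : connectedComponentIn {x | l < p x} a = connectedComponentIn {x | l < p x} b :=
      connectedComponentIn_eq hb
    exact hne (by rw [e1, e3, ← e2])
  obtain ⟨t, htI, hzeq⟩ : ∃ t ∈ Icc (0:ℝ) 1, a + t • (b - a) = z := by
    rw [segment_eq_image'] at hzseg
    obtain ⟨t, ht, hteq⟩ := hzseg
    exact ⟨t, ht, hteq⟩
  obtain ⟨ht0, ht1⟩ := htI
  -- quadratic upper bound around z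
  set D := fderiv ℝ p z with hD
  have key : ∀ y : EuclideanSpace ℝ (Fin d),
      p y - p z ≤ D (y - z) + L * ‖y - z‖ * ‖y - z‖ := by
    intro y
    have hg : ∀ x ∈ segment ℝ z y, DifferentiableAt ℝ (fun x => p x - D x) x :=
      fun x _ => (hdiff x).sub (D.differentiable x)
    have hbound : ∀ x ∈ segment ℝ z y,
        ‖fderiv ℝ (fun x => p x - D x) x‖ ≤ L * ‖y - z‖ := by
      intro x hx
      have hfx : fderiv ℝ (fun x => p x - D x) x = fderiv ℝ p x - D := by
        rw [fderiv_fun_sub (hdiff x) (D.differentiable x),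
          D.fderiv]
      rw [hfx]
      obtain ⟨s, hsI, hseq⟩ : ∃ s ∈ Icc (0:ℝ) 1, z + s • (y - z) = x := by
        rw [segment_eq_image'] at hx
        obtain ⟨s, hs, hseq⟩ := hx
        exact ⟨s, hs, hseq⟩
      have hxz : ‖x - z‖ ≤ ‖y - z‖ := by
        rw [← hseq]
        simp only [add_sub_cancel_left, norm_smul, Real.norm_eq_abs,
          abs_of_nonneg hsI.1]
        nlinarith [norm_nonneg (y - z), hsI.1, hsI.2]
      calc ‖fderiv ℝ p x - D‖ ≤ L * ‖x - z‖ := hfd x z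
        _ ≤ L * ‖y - z‖ := by nlinarith
    have := Convex.norm_image_sub_le_of_norm_fderiv_le hg hbound
      (convex_segment z y) (left_mem_segment ℝ z y) (right_mem_segment ℝ z y)
    have heq : (p y - D y) - (p z - D z) = p y - p z - D (y - z) := by
      rw [map_sub]; ring
    have h3 : ‖p y - p z - D (y - z)‖ ≤ L * ‖y - z‖ * ‖y - z‖ := by
      calc ‖p y - p z - D (y - z)‖ = ‖(p y - D y) - (p z - D z)‖ := by rw [heq]
        _ ≤ L * ‖y - z‖ * ‖y - z‖ := by
            have := this
            calc ‖(fun x => p x - D x) y - (fun x => p x - D x) z‖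
                ≤ L * ‖y - z‖ * ‖y - z‖ := by
                  simpa [mul_assoc] using this
              _ = L * ‖y - z‖ * ‖y - z‖ := rfl
    have := abs_le.mp (by rwa [Real.norm_eq_abs] at h3)
    linarith [this.2]
  -- instantiate at a and b
  have haz : a - z = (-t) • (b - a) := by
    rw [← hzeq]; module
  have hbz : b - z = (1 - t) • (b - a) := by
    rw [← hzeq]; module
  set N := ‖b - a‖ with hN
  have hN0 : 0 ≤ N := norm_nonneg _
  have hnaz : ‖a - z‖ = t * N := by
    rw [haz, norm_smul, Real.norm_eq_abs, abs_neg, abs_of_nonneg ht0]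
  have hnbz : ‖b - z‖ = (1 - t) * N := by
    rw [hbz, norm_smul, Real.norm_eq_abs, abs_of_nonneg (by linarith : (0:ℝ) ≤ 1 - t)]
  set u := D (b - a) with hu
  have ka : p a - p z ≤ (-t) * u + L * (t * N) * (t * N) := by
    have := key a
    rwa [hnaz, haz, map_smul, smul_eq_mul] at this
  have kb : p b - p z ≤ (1 - t) * u + L * ((1 - t) * N) * ((1 - t) * N) := by
    have := key b
    rwa [hnbz, hbz, map_smul, smul_eq_mul] at this
  have hda : δ ≤ p a - p z := by linarith
  have hdb : δ ≤ p b - p z := by linarith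
  -- combine: δ ≤ L/4 * N²
  have hcomb : δ ≤ L / 4 * N ^ 2 := by
    have h1 := mul_le_mul_of_nonneg_left ka (by linarith : (0:ℝ) ≤ 1 - t)
    have h2 := mul_le_mul_of_nonneg_left kb ht0
    have h3 := mul_le_mul_of_nonneg_left hda (by linarith : (0:ℝ) ≤ 1 - t)
    have h4 := mul_le_mul_of_nonneg_left hdb ht0
    have e : (1 - t) * ((-t) * u + L * (t * N) * (t * N))
        + t * ((1 - t) * u + L * ((1 - t) * N) * ((1 - t) * N))
        = L * N ^ 2 * (t * (1 - t)) := by ring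
    have hδle : δ ≤ L * N ^ 2 * (t * (1 - t)) := by
      rw [← e]; linarith
    have hq : 0 ≤ L * N ^ 2 * (1 - 2 * t) ^ 2 := by positivity
    have e2 : L * N ^ 2 * (t * (1 - t))
        = L / 4 * N ^ 2 - L * N ^ 2 * (1 - 2 * t) ^ 2 / 4 := by ring
    linarith
  -- conclude
  rw [dist_eq_norm]
  have hab : ‖a - b‖ = N := by rw [hN, norm_sub_rev]
  rw [hab]
  rw [div_mul_eq_mul_div, div_le_iff₀ hsL]
  have h5 : 4 * δ ≤ L * N ^ 2 := by linarith
  have h6 : Real.sqrt (4 * δ) ≤ Real.sqrt (L * N ^ 2) := Real.sqrt_le_sqrt h5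
  have h7 : Real.sqrt (4 * δ) = 2 * Real.sqrt δ := by
    rw [show (4:ℝ) * δ = 2 ^ 2 * δ by ring,
      Real.sqrt_mul (by positivity : (0:ℝ) ≤ 2 ^ 2),
      Real.sqrt_sq (by norm_num : (0:ℝ) ≤ 2)]
  have h8 : Real.sqrt (L * N ^ 2) = Real.sqrt L * N := by
    rw [Real.sqrt_mul hL.le, Real.sqrt_sq hN0]
  calc 2 * Real.sqrt δ = Real.sqrt (4 * δ) := h7.symm
    _ ≤ Real.sqrt (L * N ^ 2) := h6
    _ = Real.sqrt L * N := h8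
    _ = N * Real.sqrt L := by ring
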